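/- Fix n : ℕ with n ≥ 1 and γ : ℝ. With B', R, u, ψ_f as in the ramp setup (ψ_f = (Matrix.exp (I·(π/4)·B') * Matrix.exp (-I·γ·R)).mulVec u), for every w : ℕ with w ≤ n, the total probability of measuring a string of Hamming weight w satisfies ∑_{z : |z| = w} ‖ψ_f z‖² = (Nat.choose n w) · ((1 + Real.sin γ)/2)^(n - w) · ((1 - Real.sin γ)/2)^w. -/

import Mathlib

open Matrix Complex

/-- The bit-flip (Pauli X on qubit `i`) matrix on `n`-bit strings. -/
noncomputable def pauliX (n : ℕ) (i : Fin n) :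
    Matrix (Fin n → Bool) (Fin n → Bool) ℂ :=
  Matrix.of fun z z' => if z' = Function.update z i (!(z i)) then 1 else 0

/-- The Hamming weight of a bitstring: the number of `true` bits. -/
def hammingWeight {n : ℕ} (z : Fin n → Bool) : ℕ :=
  (Finset.univ.filter fun i => z i = true).card

lemma exp_smul_of_mul_self_eq_one {A : Type*} [Ring A] [Algebra ℂ A] [TopologicalSpace A]
    [IsTopologicalRing A] [T2Space A] [ContinuousSMul ℂ A] (M : A) (h : M * M = 1) (c : ℂ) :
    NormedSpace.exp (c • M) = Complex.cosh c • (1 : A) + Complex.sinh c • M := by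
  have h2 : ∀ k : ℕ, M ^ (2 * k) = 1 := fun k => by rw [pow_mul, sq, h, one_pow]
  rw [NormedSpace.exp_eq_tsum (𝕂 := ℂ)]
  refine HasSum.tsum_eq (HasSum.even_add_odd ?_ ?_)
  · have := (Complex.hasSum_cosh c).smul_const (1 : A)
    convert this using 2 with k
    rw [smul_pow, h2, smul_smul, inv_mul_eq_div]
  · have := (Complex.hasSum_sinh c).smul_const M
    convert this using 2 with k
    have hM : M ^ (2 * k + 1) = M := by rw [pow_succ, h2, one_mul]
    rw [smul_pow, hM, smul_smul, inv_mul_eq_div]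

/-- Flip bit `i` of a bitstring. -/
def bflip {n : ℕ} (i : Fin n) (z : Fin n → Bool) : Fin n → Bool :=
  Function.update z i (!(z i))

lemma bflip_apply_self {n : ℕ} (i : Fin n) (z : Fin n → Bool) : bflip i z i = !(z i) := by
  simp [bflip]

lemma bflip_apply_ne {n : ℕ} {i j : Fin n} (h : j ≠ i) (z : Fin n → Bool) : bflip i z j = z j := by
  simp [bflip, Function.update_of_ne h]

lemma bflip_bflip {n : ℕ} (i : Fin n) (z : Fin n → Bool) : bflip i (bflip i z) = z := by
  funext j
  rcases eq_or_ne j i with rfl | hj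
  · simp [bflip]
  · simp [bflip_apply_ne hj]

lemma bflip_comm {n : ℕ} {i j : Fin n} (hij : i ≠ j) (z : Fin n → Bool) :
    bflip i (bflip j z) = bflip j (bflip i z) := by
  funext k
  rcases eq_or_ne k i with rfl | hk
  · simp [bflip_apply_self, bflip_apply_ne, hij, hij.symm]
  rcases eq_or_ne k j with rfl | hk2
  · simp [bflip_apply_self, bflip_apply_ne, hk]
  · simp [bflip_apply_ne, hk, hk2]

lemma pauliX_apply {n : ℕ} (i : Fin n) (z z' : Fin n → Bool) :
    pauliX n i z z' = if z' = bflip i z then 1 else 0 := rfl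

lemma pauliX_mulVec {n : ℕ} (i : Fin n) (g : (Fin n → Bool) → ℂ) :
    (pauliX n i).mulVec g = fun z => g (bflip i z) := by
  funext z
  simp [mulVec, dotProduct, pauliX_apply, ite_mul]

lemma pauliX_mul {n : ℕ} (i j : Fin n) :
    pauliX n i * pauliX n j =
      Matrix.of fun z z'' => if z'' = bflip j (bflip i z) then 1 else 0 := by
  ext z z''
  simp only [mul_apply, pauliX_apply, of_apply, ite_mul, one_mul, zero_mul,
    Finset.sum_ite_eq', Finset.mem_univ, if_true]

lemma pauliX_mul_self {n : ℕ} (i : Fin n) : pauliX n i * pauliX n i = 1 := by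
  rw [pauliX_mul]
  ext z z''
  simp only [of_apply, bflip_bflip]
  simp [Matrix.one_apply, eq_comm]

lemma pauliX_commute {n : ℕ} (i j : Fin n) : Commute (pauliX n i) (pauliX n j) := by
  rcases eq_or_ne i j with rfl | hij
  · exact Commute.refl _
  · unfold Commute SemiconjBy
    rw [pauliX_mul, pauliX_mul]
    ext z z''
    simp only [of_apply]
    rw [bflip_comm hij]

lemma prod_univ_factor {n : ℕ} {M : Type*} [CommMonoid M] (a : Fin n) (h : Fin n → M) :
    ∏ j, h j = h a * ∏ j ∈ Finset.univ.erase a, h j :=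
  (Finset.mul_prod_erase _ _ (Finset.mem_univ a)).symm

lemma exp_pauliX_sum_mulVec {n : ℕ} (c : ℂ) (f : Fin n → Bool → ℂ) (s : Finset (Fin n)) :
    (NormedSpace.exp (∑ i ∈ s, c • pauliX n i)).mulVec (fun z => ∏ j, f j (z j)) =
      fun z => ∏ j, if j ∈ s then
          Complex.cosh c * f j (z j) + Complex.sinh c * f j (!(z j))
        else f j (z j) := by
  induction s using Finset.induction_on with
  | empty => simp [NormedSpace.exp_zero, one_mulVec]
  | @insert a s ha ih =>
    have hcomm : Commute (c • pauliX n a) (∑ i ∈ s, c • pauliX n i) :=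
      Commute.sum_right s _ _ fun i _ => ((pauliX_commute a i).smul_left c).smul_right c
    rw [Finset.sum_insert ha, Matrix.exp_add_of_commute _ _ hcomm, ← mulVec_mulVec, ih,
      exp_smul_of_mul_self_eq_one _ (pauliX_mul_self a) c, add_mulVec, smul_mulVec,
      smul_mulVec, one_mulVec, pauliX_mulVec]
    funext z
    simp only [Pi.add_apply, Pi.smul_apply, smul_eq_mul]
    simp only [prod_univ_factor a]
    have hP2 : (∏ j ∈ Finset.univ.erase a, (if j ∈ s then
          Complex.cosh c * f j (bflip a z j) + Complex.sinh c * f j (!(bflip a z j))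
        else f j (bflip a z j))) = ∏ j ∈ Finset.univ.erase a, (if j ∈ s then
          Complex.cosh c * f j (z j) + Complex.sinh c * f j (!(z j)) else f j (z j)) := by
      refine Finset.prod_congr rfl fun j hj => ?_
      rw [bflip_apply_ne (Finset.ne_of_mem_erase hj)]
    have hP3 : (∏ j ∈ Finset.univ.erase a, (if j ∈ insert a s then
          Complex.cosh c * f j (z j) + Complex.sinh c * f j (!(z j)) else f j (z j)))
        = ∏ j ∈ Finset.univ.erase a, (if j ∈ s then
          Complex.cosh c * f j (z j) + Complex.sinh c * f j (!(z j)) else f j (z j)) := by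
      refine Finset.prod_congr rfl fun j hj => ?_
      simp [Finset.mem_insert, Finset.ne_of_mem_erase hj]
    rw [hP2, hP3, bflip_apply_self, if_neg ha, if_neg ha,
      if_pos (Finset.mem_insert_self a s)]
    ring

lemma card_hammingWeight_eq (n w : ℕ) :
    (Finset.univ.filter fun z : Fin n → Bool => hammingWeight z = w).card = n.choose w := by
  have h0 : n.choose w = (Finset.powersetCard w (Finset.univ : Finset (Fin n))).card := by
    rw [Finset.card_powersetCard, Finset.card_univ, Fintype.card_fin]
  rw [h0]
  refine Finset.card_bij' (fun z _ => Finset.univ.filter fun i => z i = true)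
    (fun S _ => fun i => decide (i ∈ S)) ?_ ?_ ?_ ?_
  · intro z hz
    simp only [Finset.mem_filter, Finset.mem_univ, true_and] at hz
    rw [Finset.mem_powersetCard]
    exact ⟨Finset.subset_univ _, hz⟩
  · intro S hS
    rw [Finset.mem_powersetCard] at hS
    rw [Finset.mem_filter]
    simp only [Finset.mem_filter, Finset.mem_univ, true_and, hammingWeight]
    rw [← hS.2]
    congr 1
    ext i
    simp
  · intro z _
    funext i
    simp
  · intro S _
    ext i
    simp

/-- The exact binomial output distribution of QAOA1 on the Hamming ramp: the
probability of measuring a string of Hamming weight `w` is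
`C(n,w) ((1+sin γ)/2)^(n-w) ((1-sin γ)/2)^w`. -/
theorem qaoa1_ramp_weight_distribution (n : ℕ) (hn : 1 ≤ n) (γ : ℝ)
    (B' R : Matrix (Fin n → Bool) (Fin n → Bool) ℂ)
    (hB' : B' = ∑ i, pauliX n i)
    (hR : R = Matrix.diagonal fun z => (hammingWeight z : ℂ))
    (u : (Fin n → Bool) → ℂ)
    (hu : u = fun _ => (((2 : ℝ) ^ (-(n : ℝ) / 2) : ℝ) : ℂ))
    (ψf : (Fin n → Bool) → ℂ)
    (hψf : ψf = (NormedSpace.exp ((Complex.I * ((Real.pi : ℂ) / 4)) • B') *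
        NormedSpace.exp ((-Complex.I * (γ : ℂ)) • R)).mulVec u)
    (w : ℕ) (hw : w ≤ n) :
    ∑ z ∈ Finset.univ.filter (fun z : Fin n → Bool => hammingWeight z = w),
        ‖ψf z‖ ^ 2 =
      (Nat.choose n w : ℝ) * ((1 + Real.sin γ) / 2) ^ (n - w) *
        ((1 - Real.sin γ) / 2) ^ w := by
  subst hB' hR hu hψf
  set r : ℝ := Real.sqrt 2 / 2 with hr
  set c : ℂ := Complex.I * ((Real.pi : ℂ) / 4) with hc
  set K : ℝ := (2 : ℝ) ^ (-(n : ℝ) / 2) with hK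
  set E : ℂ := Complex.exp (-Complex.I * (γ : ℂ)) with hE
  have hcI : c = ((Real.pi / 4 : ℝ) : ℂ) * Complex.I := by rw [hc]; push_cast; ring
  have hcosh : Complex.cosh c = (r : ℂ) := by
    rw [hcI, Complex.cosh_mul_I, ← Complex.ofReal_cos, Real.cos_pi_div_four]
  have hsinh : Complex.sinh c = (r : ℂ) * Complex.I := by
    rw [hcI, Complex.sinh_mul_I, ← Complex.ofReal_sin, Real.sin_pi_div_four]
  have hexp : E = ((Real.cos γ : ℝ) : ℂ) - ((Real.sin γ : ℝ) : ℂ) * Complex.I := by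
    rw [hE, show -Complex.I * (γ : ℂ) = ((-γ : ℝ) : ℂ) * Complex.I by push_cast; ring,
      Complex.exp_mul_I, ← Complex.ofReal_cos, ← Complex.ofReal_sin, Real.cos_neg, Real.sin_neg]
    push_cast
    ring
  -- the diagonal factor
  have hdiag : NormedSpace.exp ((-Complex.I * (γ : ℂ)) •
      Matrix.diagonal (fun z : Fin n → Bool => (hammingWeight z : ℂ)))
      = Matrix.diagonal
        (fun z : Fin n → Bool => Complex.exp (-Complex.I * (γ : ℂ) * (hammingWeight z : ℂ))) := by
    rw [← Matrix.diagonal_smul,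
      show ((-Complex.I * (γ : ℂ)) • fun z : Fin n → Bool => ((hammingWeight z : ℂ))) =
        (fun z : Fin n → Bool => -Complex.I * (γ : ℂ) * (hammingWeight z : ℂ)) from
        funext fun z => by simp,
      Matrix.exp_diagonal, Pi.exp_def, ← Complex.exp_eq_exp_ℂ]
  have hvec : (Matrix.diagonal
        (fun z : Fin n → Bool => Complex.exp (-Complex.I * (γ : ℂ) * (hammingWeight z : ℂ)))).mulVec
        (fun _ : Fin n → Bool => ((K : ℝ) : ℂ))
      = ((K : ℝ) : ℂ) • fun z : Fin n → Bool => ∏ j, (if z j then E else 1) := by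
    funext z
    rw [Matrix.mulVec_diagonal]
    simp only [Pi.smul_apply, smul_eq_mul]
    rw [← Finset.prod_filter, Finset.prod_const]
    have hcard : (Finset.univ.filter fun j => z j = true).card = hammingWeight z := rfl
    rw [hcard, hE, ← Complex.exp_nat_mul,
      show (hammingWeight z : ℂ) * (-Complex.I * (γ : ℂ)) =
        -Complex.I * (γ : ℂ) * (hammingWeight z : ℂ) by ring, mul_comm]
  have hψ : ((NormedSpace.exp (c • ∑ i, pauliX n i) *
        NormedSpace.exp ((-Complex.I * (γ : ℂ)) •
          Matrix.diagonal (fun z : Fin n → Bool => (hammingWeight z : ℂ)))).mulVec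
        (fun _ : Fin n → Bool => ((K : ℝ) : ℂ)))
      = ((K : ℝ) : ℂ) • fun z : Fin n → Bool =>
          ∏ j, (Complex.cosh c * (if z j then E else 1)
            + Complex.sinh c * (if !(z j) then E else 1)) := by
    rw [← mulVec_mulVec, hdiag, hvec, mulVec_smul, Finset.smul_sum,
      exp_pauliX_sum_mulVec c (fun _ t => if t then E else 1) Finset.univ]
    simp only [Finset.mem_univ, if_true]
  rw [hψ]
  -- norms of the two per-bit factors
  have hsq2 : Real.sqrt 2 ^ 2 = 2 := Real.sq_sqrt (by norm_num)
  have hGt : ‖Complex.cosh c * E + Complex.sinh c * 1‖ ^ 2 = 1 - Real.sin γ := by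
    have h1 : Complex.cosh c * E + Complex.sinh c * 1 =
        ((r * Real.cos γ : ℝ) : ℂ) + ((r * (1 - Real.sin γ) : ℝ) : ℂ) * Complex.I := by
      rw [hcosh, hsinh, hexp]
      simp only [Complex.ofReal_mul, Complex.ofReal_sub, Complex.ofReal_add, Complex.ofReal_one]
      ring
    rw [h1, Complex.sq_norm, Complex.normSq_add_mul_I, hr]
    nlinarith [Real.sin_sq_add_cos_sq γ, hsq2]
  have hGf : ‖Complex.cosh c * 1 + Complex.sinh c * E‖ ^ 2 = 1 + Real.sin γ := by
    have h1 : Complex.cosh c * 1 + Complex.sinh c * E =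
        ((r * (1 + Real.sin γ) : ℝ) : ℂ) + ((r * Real.cos γ : ℝ) : ℂ) * Complex.I := by
      rw [hcosh, hsinh, hexp]
      simp only [Complex.ofReal_mul, Complex.ofReal_sub, Complex.ofReal_add, Complex.ofReal_one]
      linear_combination (-(r : ℂ) * ((Real.sin γ : ℝ) : ℂ)) * Complex.I_sq
    rw [h1, Complex.sq_norm, Complex.normSq_add_mul_I, hr]
    nlinarith [Real.sin_sq_add_cos_sq γ, hsq2]
  have hKnorm : ‖((K : ℝ) : ℂ)‖ = K :=
    (Complex.norm_real K).trans (abs_of_nonneg (Real.rpow_nonneg (by norm_num) _))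
  have hK2 : K ^ 2 = ((2 : ℝ) ^ n)⁻¹ := by
    rw [hK, ← Real.rpow_natCast ((2 : ℝ) ^ (-(n : ℝ) / 2)) 2,
      ← Real.rpow_mul (by norm_num : (0 : ℝ) ≤ 2),
      show -(n : ℝ) / 2 * ((2 : ℕ) : ℝ) = -(n : ℝ) by push_cast; ring,
      Real.rpow_neg (by norm_num), Real.rpow_natCast]
  -- each term of the sum
  have hterm : ∀ z ∈ Finset.univ.filter (fun z : Fin n → Bool => hammingWeight z = w),
      ‖(((K : ℝ) : ℂ) • fun z : Fin n → Bool =>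
          ∏ j, (Complex.cosh c * (if z j then E else 1)
            + Complex.sinh c * (if !(z j) then E else 1))) z‖ ^ 2
        = ((2 : ℝ) ^ n)⁻¹ * ((1 - Real.sin γ) ^ w * (1 + Real.sin γ) ^ (n - w)) := by
    intro z hz
    rw [Finset.mem_filter] at hz
    have hzw : (Finset.univ.filter fun j => z j = true).card = w := hz.2
    have hzw' : (Finset.univ.filter fun j => ¬(z j = true)).card = n - w := by
      have := Finset.card_filter_add_card_filter_not
        (s := (Finset.univ : Finset (Fin n))) (p := fun j => z j = true)
      rw [Finset.card_univ, Fintype.card_fin, hzw] at this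
      omega
    simp only [Pi.smul_apply, smul_eq_mul, norm_mul, mul_pow, hKnorm, hK2]
    congr 1
    rw [norm_prod, ← Finset.prod_pow]
    rw [← Finset.prod_filter_mul_prod_filter_not Finset.univ (fun j => z j = true)]
    congr 1
    · rw [Finset.prod_congr rfl (fun j hj => ?_), Finset.prod_const, hzw]
      rw [Finset.mem_filter] at hj
      rw [hj.2]
      simp only [Bool.not_true, if_true, if_false]
      exact hGt
    · rw [Finset.prod_congr rfl (fun j hj => ?_), Finset.prod_const, hzw']
      rw [Finset.mem_filter] at hj
      have : z j = false := by
        cases h : z j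
        · rfl
        · exact absurd h hj.2
      rw [this]
      simp only [Bool.not_false, if_true, if_false]
      exact hGf
  rw [Finset.sum_congr rfl hterm, Finset.sum_const, card_hammingWeight_eq, nsmul_eq_mul]
  have h2n : (2 : ℝ) ^ (n - w) * 2 ^ w = 2 ^ n := by
    rw [← pow_add]
    congr 1
    omega
  rw [div_pow, div_pow]
  rw [show ((2 : ℝ) ^ n)⁻¹ = ((2 : ℝ) ^ (n - w) * 2 ^ w)⁻¹ by rw [h2n]]
  have hpos : (2 : ℝ) ^ (n - w) ≠ 0 := by positivity
  have hpos2 : (2 : ℝ) ^ w ≠ 0 := by positivity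
  field_simp
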